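/- Let x(·) be a solution of ẋ = f(x) where f is C¹ with |f(y)| ≥ L₀ > 0 and Lipschitz constant L₁ along the solution. If 0 < γ < L₀/L₁ and the arc length satisfies ∫ₛᵗ|f(x(τ))|dτ < (2L₀/L₁)·(π − arcsin(L₁γ/L₀)), then the tube of radius γ around x(·) is non-self-overlapping over (s,t), i.e. N_γ(x(τ₁)) ∩ N_γ(x(τ₂)) = ∅ for all distinct τ₁, τ₂ ∈ (s,t). -/

import Mathlib

open Set Metric intervalIntegral
open scoped RealInnerProductSpace

set_option maxHeartbeats 1000000 in
private theorem angle_comp {E : Type*} [NormedAddCommGroup E] [InnerProductSpace ℝ E]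
    (u u' : ℝ → E) {a b L : ℝ} (hab : a ≤ b) (hL : 0 ≤ L)
    (hderiv : ∀ τ ∈ Icc a b, HasDerivWithinAt u (u' τ) (Icc a b) τ)
    (hunit : ∀ τ ∈ Icc a b, ‖u τ‖ = 1)
    (horth : ∀ τ ∈ Icc a b, ⟪u τ, u' τ⟫ = 0)
    (hbd : ∀ τ ∈ Icc a b, ‖u' τ‖ ≤ L) :
    Real.cos (min (L * (b - a)) Real.pi) ≤ ⟪u b, u a⟫ := by
  have ha : a ∈ Icc a b := ⟨le_rfl, hab⟩
  have hb : b ∈ Icc a b := ⟨hab, le_rfl⟩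
  set w := u a with hw
  have hw1 : ‖w‖ = 1 := hunit a ha
  set p : ℝ → ℝ := fun τ => ⟪u τ, w⟫ with hp
  have hpabs : ∀ τ ∈ Icc a b, |p τ| ≤ 1 := by
    intro τ hτ
    calc |p τ| ≤ ‖u τ‖ * ‖w‖ := abs_real_inner_le_norm _ _
    _ = 1 := by rw [hunit τ hτ, hw1, mul_one]
  have hpa : p a = 1 := by
    simp only [hp, ← hw, real_inner_self_eq_norm_sq, hw1, one_pow]
  -- derivative of p
  have hpderiv : ∀ τ ∈ Icc a b, HasDerivWithinAt p ⟪u' τ, w⟫ (Icc a b) τ := by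
    intro τ hτ
    have := (hderiv τ hτ).inner ℝ (hasDerivWithinAt_const τ (Icc a b) w)
    simpa using this
  -- bound on |p'|
  have hpbd : ∀ τ ∈ Icc a b, |⟪u' τ, w⟫| ≤ L * Real.sqrt (1 - (p τ)^2) := by
    intro τ hτ
    have horth' : ⟪u' τ, u τ⟫ = 0 := by rw [real_inner_comm]; exact horth τ hτ
    have hq : ⟪u' τ, w⟫ = ⟪u' τ, w - p τ • u τ⟫ := by
      rw [inner_sub_right, real_inner_smul_right, horth', mul_zero, sub_zero]
    have hnorm : ‖w - p τ • u τ‖ = Real.sqrt (1 - (p τ)^2) := by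
      have h2 : ‖w - p τ • u τ‖^2 = 1 - (p τ)^2 := by
        rw [norm_sub_sq_real, real_inner_smul_right, norm_smul]
        have : ⟪w, u τ⟫ = p τ := real_inner_comm _ _
        rw [this, hunit τ hτ, hw1]
        simp [Real.norm_eq_abs, sq_abs]; ring
      rw [← h2, Real.sqrt_sq (norm_nonneg _)]
    calc |⟪u' τ, w⟫| = |⟪u' τ, w - p τ • u τ⟫| := by rw [hq]
    _ ≤ ‖u' τ‖ * ‖w - p τ • u τ‖ := abs_real_inner_le_norm _ _
    _ ≤ L * Real.sqrt (1 - (p τ)^2) := by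
        rw [hnorm]
        exact mul_le_mul_of_nonneg_right (hbd τ hτ) (Real.sqrt_nonneg _)
  -- main ε-estimate
  have main : ∀ ε ∈ Ioo (0:ℝ) 1,
      Real.cos (min (Real.arccos (1-ε) + L * (b-a)) Real.pi) ≤ (1-ε) * p b := by
    intro ε hε
    set c : ℝ := 1 - ε with hc
    have hc0 : 0 < c := by simp [hc]; linarith [hε.2]
    have hc1 : c < 1 := by simp [hc]; linarith [hε.1]
    have hzabs : ∀ τ ∈ Icc a b, |c * p τ| < 1 := by
      intro τ hτ
      rw [abs_mul, abs_of_pos hc0]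
      calc c * |p τ| ≤ c * 1 := by
            exact mul_le_mul_of_nonneg_left (hpabs τ hτ) hc0.le
      _ < 1 := by linarith
    set P : ℝ → ℝ := fun τ => Real.arccos (c * p τ) with hP
    have hPderiv : ∀ τ ∈ Icc a b, HasDerivWithinAt P
        (-(1 / Real.sqrt (1 - (c * p τ)^2)) * (c * ⟪u' τ, w⟫)) (Icc a b) τ := by
      intro τ hτ
      have hz := hzabs τ hτ
      have h1 : c * p τ ≠ 1 := by intro h; rw [h] at hz; simp at hz
      have h2 : c * p τ ≠ -1 := by intro h; rw [h] at hz; simp at hz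
      have hmul : HasDerivWithinAt (fun τ => c * p τ) (c * ⟪u' τ, w⟫) (Icc a b) τ :=
        (hpderiv τ hτ).const_mul c
      exact (Real.hasDerivAt_arccos h2 h1).comp_hasDerivWithinAt (h₂ := Real.arccos) (h := fun τ => c * p τ) τ hmul
    have hPbd : ∀ τ ∈ Icc a b,
        ‖-(1 / Real.sqrt (1 - (c * p τ)^2)) * (c * ⟪u' τ, w⟫)‖ ≤ L := by
      intro τ hτ
      have hz := hzabs τ hτ
      have hzsq : (c * p τ)^2 < 1 := by
        rw [← one_pow 2]; exact sq_lt_sq' (by linarith [abs_lt.1 hz]) (by linarith [abs_lt.1 hz])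
      have hden : 0 < Real.sqrt (1 - (c * p τ)^2) := Real.sqrt_pos.2 (by linarith)
      have key : c * |⟪u' τ, w⟫| ≤ L * Real.sqrt (1 - (c * p τ)^2) := by
        calc c * |⟪u' τ, w⟫| ≤ c * (L * Real.sqrt (1 - (p τ)^2)) :=
              mul_le_mul_of_nonneg_left (hpbd τ hτ) hc0.le
        _ = L * (c * Real.sqrt (1 - (p τ)^2)) := by ring
        _ ≤ L * Real.sqrt (1 - (c * p τ)^2) := by
            apply mul_le_mul_of_nonneg_left _ hL
            have heq : c * Real.sqrt (1 - (p τ)^2) = Real.sqrt (c^2 * (1 - (p τ)^2)) := by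
              rw [Real.sqrt_mul (sq_nonneg c), Real.sqrt_sq hc0.le]
            rw [heq]
            apply Real.sqrt_le_sqrt
            have hp2 : (p τ)^2 ≤ 1 := by
              rw [← one_pow 2, ← sq_abs]
              exact pow_le_pow_left₀ (abs_nonneg _) (hpabs τ hτ) 2
            have hcsq : c^2 ≤ 1 := by nlinarith
            nlinarith [sq_nonneg (p τ)]
      rw [norm_mul, norm_neg, norm_div, Real.norm_eq_abs, Real.norm_eq_abs, Real.norm_eq_abs]
      rw [abs_of_pos hden, abs_one, abs_mul, abs_of_pos hc0]
      rw [div_mul_eq_mul_div, one_mul, div_le_iff₀ hden]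
      exact key
    have hMVT : ‖P b - P a‖ ≤ L * ‖b - a‖ := by
      exact (convex_Icc a b).norm_image_sub_le_of_norm_hasDerivWithin_le
        hPderiv hPbd ha hb
    have hPb_le : P b ≤ Real.arccos c + L * (b - a) := by
      have h1 : P b - P a ≤ L * (b - a) := by
        rw [Real.norm_eq_abs, Real.norm_eq_abs, abs_of_nonneg (sub_nonneg.2 hab)] at hMVT
        exact le_trans (le_abs_self _) hMVT
      have hPa : P a = Real.arccos c := by
        show Real.arccos (c * p a) = Real.arccos c
        rw [hpa, mul_one]
      linarith
    have hPb_mem : 0 ≤ P b ∧ P b ≤ Real.pi := ⟨Real.arccos_nonneg _, Real.arccos_le_pi _⟩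
    have hcos : Real.cos (min (Real.arccos c + L * (b-a)) Real.pi) ≤ Real.cos (P b) :=
      Real.cos_le_cos_of_nonneg_of_le_pi hPb_mem.1 (min_le_right _ _)
        (le_min hPb_le hPb_mem.2)
    have habs := abs_le.1 (hzabs b hb).le
    have hfin : Real.cos (P b) = c * p b := Real.cos_arccos habs.1 habs.2
    linarith
  -- limit ε → 0⁺
  have t1 : Filter.Tendsto (fun ε : ℝ => (1-ε) * p b) (nhdsWithin 0 (Ioi 0)) (nhds (p b)) := by
    have hcont : Continuous (fun ε : ℝ => (1-ε) * p b) := by continuity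
    have := hcont.tendsto 0
    simp only [sub_zero, one_mul] at this
    exact this.mono_left nhdsWithin_le_nhds
  have t2 : Filter.Tendsto (fun ε : ℝ => Real.cos (min (Real.arccos (1-ε) + L * (b-a)) Real.pi))
      (nhdsWithin 0 (Ioi 0)) (nhds (Real.cos (min (L * (b-a)) Real.pi))) := by
    have hcont : Continuous (fun ε : ℝ => Real.cos (min (Real.arccos (1-ε) + L * (b-a)) Real.pi)) := by
      apply Real.continuous_cos.comp
      exact (Real.continuous_arccos.comp (continuous_const.sub continuous_id)).add
        continuous_const |>.min continuous_const
    have := hcont.tendsto 0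
    simp only [sub_zero, Real.arccos_one, zero_add] at this
    exact this.mono_left nhdsWithin_le_nhds
  refine le_of_tendsto_of_tendsto t2 t1 ?_
  filter_upwards [Ioo_mem_nhdsGT_of_mem (Set.mem_Ico.2 ⟨le_rfl, one_pos⟩)] with ε hε
  exact main ε hε

/-- The normal disk of radius `γ` to the vector field `f` at the point `p`. -/
def normalDisk {n : ℕ} (f : EuclideanSpace ℝ (Fin n) → EuclideanSpace ℝ (Fin n))
    (γ : ℝ) (p : EuclideanSpace ℝ (Fin n)) : Set (EuclideanSpace ℝ (Fin n)) :=
  {y | ‖y - p‖ ≤ γ ∧ ⟪y - p, f p⟫ = 0}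

set_option maxHeartbeats 2000000 in
theorem stmt_9 {n : ℕ}
    (f : EuclideanSpace ℝ (Fin n) → EuclideanSpace ℝ (Fin n))
    (x : ℝ → EuclideanSpace ℝ (Fin n))
    (s t γ L₀ L₁ : ℝ)
    (hf_C1 : ContDiff ℝ 1 f)
    (hsol : ∀ τ, HasDerivAt x (f (x τ)) τ)
    (hst : s ≤ t)
    (hL₀_pos : 0 < L₀) (hL₁_pos : 0 < L₁)
    (hL₀ : ∀ τ ∈ Set.Icc s t, L₀ ≤ ‖f (x τ)‖)
    (hL₁ : ∃ U : Set (EuclideanSpace ℝ (Fin n)), IsOpen U ∧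
      (∀ τ ∈ Set.Icc s t, x τ ∈ U) ∧
      ∀ y₁ ∈ U, ∀ y₂ ∈ U, ‖f y₁ - f y₂‖ ≤ L₁ * ‖y₁ - y₂‖)
    (hγ : 0 < γ) (hγL : γ < L₀ / L₁)
    (hlen : (∫ τ in s..t, ‖f (x τ)‖) <
      (2 * L₀ / L₁) * (Real.pi - Real.arcsin (L₁ * γ / L₀))) :
    ∀ τ₁ ∈ Set.Ioo s t, ∀ τ₂ ∈ Set.Ioo s t, τ₁ ≠ τ₂ →
      normalDisk f γ (x τ₁) ∩ normalDisk f γ (x τ₂) = ∅ := by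
  obtain ⟨U, hUopen, hxU, hUlip⟩ := hL₁
  have hfc : Continuous f := hf_C1.continuous
  have hxc : Continuous x := by
    rw [continuous_iff_continuousAt]; exact fun τ => (hsol τ).continuousAt
  set F : ℝ → EuclideanSpace ℝ (Fin n) := fun τ => f (x τ) with hF
  have hFc : Continuous F := hfc.comp hxc
  have hNc : Continuous (fun τ => ‖F τ‖) := hFc.norm
  -- derivative of F
  set F' : ℝ → EuclideanSpace ℝ (Fin n) := fun τ => (fderiv ℝ f (x τ)) (F τ) with hF'
  have hF'deriv : ∀ τ, HasDerivAt F (F' τ) τ := fun τ =>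
    ((hf_C1.differentiable one_ne_zero (x τ)).hasFDerivAt).comp_hasDerivAt τ (hsol τ)
  have hlip : LipschitzOnWith L₁.toNNReal f U := by
    apply LipschitzOnWith.of_dist_le'
    intro y₁ h₁ y₂ h₂
    rw [dist_eq_norm, dist_eq_norm]
    exact hUlip y₁ h₁ y₂ h₂
  have hF'bd : ∀ τ ∈ Icc s t, ‖F' τ‖ ≤ L₁ * ‖F τ‖ := by
    intro τ hτ
    have hop : ‖fderiv ℝ f (x τ)‖ ≤ L₁ := by
      have h1 := HasFDerivAt.le_of_lipschitzOn
        ((hf_C1.differentiable one_ne_zero (x τ)).hasFDerivAt)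
        (hUopen.mem_nhds (hxU τ hτ)) hlip
      rwa [Real.coe_toNNReal _ hL₁_pos.le] at h1
    calc ‖F' τ‖ ≤ ‖fderiv ℝ f (x τ)‖ * ‖F τ‖ := (fderiv ℝ f (x τ)).le_opNorm _
    _ ≤ L₁ * ‖F τ‖ := mul_le_mul_of_nonneg_right hop (norm_nonneg _)
  have hFpos : ∀ τ ∈ Icc s t, 0 < ‖F τ‖ := fun τ hτ => lt_of_lt_of_le hL₀_pos (hL₀ τ hτ)
  -- unit tangent
  set u : ℝ → EuclideanSpace ℝ (Fin n) := fun τ => (‖F τ‖)⁻¹ • F τ with hu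
  set u' : ℝ → EuclideanSpace ℝ (Fin n) := fun τ =>
    (-(⟪F τ, F' τ⟫ / ‖F τ‖) / (‖F τ‖)^2) • F τ + (‖F τ‖)⁻¹ • F' τ with hu'
  have hNderiv : ∀ τ ∈ Icc s t, HasDerivAt (fun σ => ‖F σ‖) (⟪F τ, F' τ⟫ / ‖F τ‖) τ := by
    intro τ hτ
    have hinner : HasDerivAt (fun σ => ⟪F σ, F σ⟫) (⟪F τ, F' τ⟫ + ⟪F' τ, F τ⟫) τ :=
      (hF'deriv τ).inner ℝ (hF'deriv τ)
    have hpos := hFpos τ hτ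
    have hne : ⟪F τ, F τ⟫ ≠ 0 := by
      rw [real_inner_self_eq_norm_mul_norm]
      exact (mul_pos hpos hpos).ne'
    have hsqrt := (Real.hasDerivAt_sqrt hne).comp τ hinner
    simp only [Function.comp_def] at hsqrt
    have heq : (fun σ => Real.sqrt ⟪F σ, F σ⟫) = fun σ => ‖F σ‖ := by
      funext σ
      rw [real_inner_self_eq_norm_mul_norm, Real.sqrt_mul_self (norm_nonneg _)]
    rw [heq] at hsqrt
    refine hsqrt.congr_deriv ?_
    rw [real_inner_self_eq_norm_mul_norm, Real.sqrt_mul_self (norm_nonneg _),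
      real_inner_comm (F' τ) (F τ)]
    field_simp
    ring
  have huderiv : ∀ τ ∈ Icc s t, HasDerivAt u (u' τ) τ := by
    intro τ hτ
    have hpos := hFpos τ hτ
    have hinv : HasDerivAt (fun σ => (‖F σ‖)⁻¹) (-(⟪F τ, F' τ⟫ / ‖F τ‖) / (‖F τ‖)^2) τ :=
      (hNderiv τ hτ).inv hpos.ne'
    have h := hinv.smul (hF'deriv τ)
    have heq2 : u' τ = ‖F τ‖⁻¹ • F' τ + (-(⟪F τ, F' τ⟫ / ‖F τ‖) / ‖F τ‖ ^ 2) • F τ := by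
      simp only [hu']
      rw [add_comm]
    rw [heq2]
    exact h
  have hunit : ∀ τ ∈ Icc s t, ‖u τ‖ = 1 := by
    intro τ hτ
    rw [hu]
    simp only [norm_smul, norm_inv, norm_norm]
    exact inv_mul_cancel₀ (hFpos τ hτ).ne'
  have hu'eq : ∀ τ ∈ Icc s t, u' τ = (‖F τ‖)⁻¹ • (F' τ - (⟪F τ, F' τ⟫ / (‖F τ‖)^2) • F τ) := by
    intro τ hτ
    have hpos := hFpos τ hτ
    simp only [hu']
    rw [smul_sub, smul_smul]
    have hc : (-(⟪F τ, F' τ⟫ / ‖F τ‖) / ‖F τ‖ ^ 2)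
        = -(‖F τ‖⁻¹ * (⟪F τ, F' τ⟫ / ‖F τ‖ ^ 2)) := by
      field_simp
    rw [hc, neg_smul, neg_add_eq_sub]
  have horth : ∀ τ ∈ Icc s t, ⟪u τ, u' τ⟫ = 0 := by
    intro τ hτ
    have hpos := hFpos τ hτ
    rw [hu'eq τ hτ]
    have huτ : u τ = ‖F τ‖⁻¹ • F τ := rfl
    rw [huτ, real_inner_smul_left, real_inner_smul_right, inner_sub_right,
      real_inner_smul_right, real_inner_self_eq_norm_mul_norm]
    field_simp
    ring
  have hubd : ∀ τ ∈ Icc s t, ‖u' τ‖ ≤ L₁ := by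
    intro τ hτ
    have hpos := hFpos τ hτ
    rw [hu'eq τ hτ]
    set c : ℝ := ⟪F τ, F' τ⟫ / (‖F τ‖)^2 with hc
    have hvbd : ‖F' τ - c • F τ‖ ≤ ‖F' τ‖ := by
      have hsq : ‖F' τ - c • F τ‖^2 ≤ ‖F' τ‖^2 := by
        rw [norm_sub_sq_real, real_inner_smul_right, norm_smul, Real.norm_eq_abs]
        have hcF : ⟪F' τ, F τ⟫ = c * ‖F τ‖^2 := by
          rw [hc, real_inner_comm (F' τ) (F τ)]
          field_simp
        rw [hcF]
        have h1 : (|c| * ‖F τ‖)^2 = c^2 * ‖F τ‖^2 := by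
          rw [mul_pow, sq_abs]
        nlinarith [sq_nonneg (c * ‖F τ‖), sq_nonneg c, sq_nonneg (‖F τ‖)]
      have h2 := Real.sqrt_le_sqrt hsq
      rwa [Real.sqrt_sq (norm_nonneg _), Real.sqrt_sq (norm_nonneg _)] at h2
    calc ‖(‖F τ‖)⁻¹ • (F' τ - c • F τ)‖ = (‖F τ‖)⁻¹ * ‖F' τ - c • F τ‖ := by
          rw [norm_smul, norm_inv, norm_norm]
    _ ≤ (‖F τ‖)⁻¹ * (L₁ * ‖F τ‖) := by
        apply mul_le_mul_of_nonneg_left _ (inv_nonneg.2 (norm_nonneg _))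
        exact le_trans hvbd (hF'bd τ hτ)
    _ = L₁ := by field_simp
  -- the key claim
  have key : ∀ τ₁ τ₂, τ₁ ∈ Ioo s t → τ₂ ∈ Ioo s t → τ₁ < τ₂ →
      ∀ y, y ∈ normalDisk f γ (x τ₁) → y ∈ normalDisk f γ (x τ₂) → False := by
    intro τ₁ τ₂ hτ₁ hτ₂ hlt y hy₁ hy₂
    obtain ⟨hy₁n, hy₁o⟩ := hy₁
    obtain ⟨hy₂n, hy₂o⟩ := hy₂
    have hτ₁st : τ₁ ∈ Icc s t := ⟨hτ₁.1.le, hτ₁.2.le⟩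
    have hτ₂st : τ₂ ∈ Icc s t := ⟨hτ₂.1.le, hτ₂.2.le⟩
    have hsubI : Icc τ₁ τ₂ ⊆ Icc s t := Icc_subset_Icc hτ₁.1.le hτ₂.2.le
    -- arc length function
    set S : ℝ → ℝ := fun r => ∫ σ in τ₁..r, ‖F σ‖ with hSdef
    have hSderiv : ∀ r : ℝ, HasDerivAt S ‖F r‖ r := by
      intro r
      exact intervalIntegral.integral_hasDerivAt_right (hNc.intervalIntegrable _ _)
        (hNc.stronglyMeasurableAtFilter _ _) hNc.continuousAt
    have hSc : Continuous S := by
      rw [continuous_iff_continuousAt]; exact fun r => (hSderiv r).continuousAt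
    have hS₁ : S τ₁ = 0 := intervalIntegral.integral_same
    set ℓ : ℝ := S τ₂ with hℓdef
    have hSval : ∀ r : ℝ, S r = ∫ σ in τ₁..r, ‖F σ‖ := fun r => rfl
    have hSdiff : ∀ a b : ℝ, S b - S a = ∫ σ in a..b, ‖F σ‖ := by
      intro a b
      have h : (∫ σ in τ₁..a, ‖F σ‖) + (∫ σ in a..b, ‖F σ‖) = ∫ σ in τ₁..b, ‖F σ‖ :=
        intervalIntegral.integral_add_adjacent_intervals
          (hNc.intervalIntegrable τ₁ a) (hNc.intervalIntegrable a b)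
      rw [hSval a, hSval b]
      linarith [h]
    have hSlow : ∀ a b : ℝ, a ≤ b → Icc a b ⊆ Icc s t → L₀ * (b - a) ≤ S b - S a := by
      intro a b hab hsub
      rw [hSdiff]
      have h1 : (∫ _σ in a..b, L₀) ≤ ∫ σ in a..b, ‖F σ‖ :=
        intervalIntegral.integral_mono_on hab
          (intervalIntegrable_const : IntervalIntegrable (fun _ => L₀) MeasureTheory.volume a b)
          (hNc.intervalIntegrable a b) (fun σ hσ => hL₀ σ (hsub hσ))
      rwa [intervalIntegral.integral_const, smul_eq_mul, mul_comm] at h1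
    have hSnonneg : ∀ a b : ℝ, a ≤ b → 0 ≤ S b - S a := by
      intro a b hab
      rw [hSdiff]
      exact intervalIntegral.integral_nonneg hab (fun σ _ => norm_nonneg _)
    have hℓpos : 0 < ℓ := by
      have h1 := hSlow τ₁ τ₂ hlt.le hsubI
      have h2 : 0 < L₀ * (τ₂ - τ₁) := mul_pos hL₀_pos (by linarith)
      rw [hS₁, sub_zero] at h1
      linarith
    -- the constant β
    have hz1 : L₁ * γ / L₀ < 1 := by
      rw [div_lt_one hL₀_pos]
      have := (lt_div_iff₀ hL₁_pos).1 hγL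
      linarith
    have hz0 : (0:ℝ) ≤ L₁ * γ / L₀ := by positivity
    have hβπ : Real.pi - Real.arcsin (L₁ * γ / L₀) ≤ Real.pi := by
      linarith [Real.arcsin_nonneg.2 hz0]
    have hsinβ : Real.sin (Real.pi - Real.arcsin (L₁ * γ / L₀)) = L₁ * γ / L₀ := by
      rw [Real.sin_pi_sub, Real.sin_arcsin (by linarith) hz1.le]
    -- ℓ is less than the total arc length
    have hℓβ : ℓ < (2 * L₀ / L₁) * (Real.pi - Real.arcsin (L₁ * γ / L₀)) := by
      have h1 : (0:ℝ) ≤ ∫ σ in s..τ₁, ‖F σ‖ :=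
        intervalIntegral.integral_nonneg hτ₁.1.le (fun _ _ => norm_nonneg _)
      have h2 : (0:ℝ) ≤ ∫ σ in τ₂..t, ‖F σ‖ :=
        intervalIntegral.integral_nonneg hτ₂.2.le (fun _ _ => norm_nonneg _)
      have h3 : (∫ σ in s..τ₁, ‖F σ‖) + (∫ σ in τ₁..τ₂, ‖F σ‖) = ∫ σ in s..τ₂, ‖F σ‖ :=
        intervalIntegral.integral_add_adjacent_intervals
          (hNc.intervalIntegrable s τ₁) (hNc.intervalIntegrable τ₁ τ₂)
      have h4 : (∫ σ in s..τ₂, ‖F σ‖) + (∫ σ in τ₂..t, ‖F σ‖) = ∫ σ in s..t, ‖F σ‖ :=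
        intervalIntegral.integral_add_adjacent_intervals
          (hNc.intervalIntegrable s τ₂) (hNc.intervalIntegrable τ₂ t)
      have h5 : ℓ = ∫ σ in τ₁..τ₂, ‖F σ‖ := by rw [hℓdef, hSval]
      calc ℓ ≤ ∫ σ in s..t, ‖F σ‖ := by rw [← h4, ← h3]; linarith [h5]
      _ < _ := hlen
    have hΘβ : (L₁/L₀) * (ℓ/2) < Real.pi - Real.arcsin (L₁ * γ / L₀) := by
      have h6 : L₁ * ℓ < 2 * L₀ * (Real.pi - Real.arcsin (L₁ * γ / L₀)) := by
        have h7 := mul_lt_mul_of_pos_left hℓβ hL₁_pos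
        have h8 : L₁ * (2 * L₀ / L₁ * (Real.pi - Real.arcsin (L₁ * γ / L₀)))
            = 2 * L₀ * (Real.pi - Real.arcsin (L₁ * γ / L₀)) := by
          field_simp
        linarith [h7, h8.le, h8.ge]
      rw [div_mul_eq_mul_div, div_lt_iff₀ hL₀_pos]
      nlinarith [h6]
    have hΘpos : 0 < (L₁/L₀) * (ℓ/2) := by positivity
    have hΘπ : (L₁/L₀) * (ℓ/2) ≤ Real.pi := le_trans hΘβ.le hβπ
    -- the angle comparison specialized
    have hang : ∀ a b, τ₁ ≤ a → a ≤ b → b ≤ τ₂ → (L₁/L₀) * (S b - S a) ≤ Real.pi →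
        Real.cos ((L₁/L₀) * (S b - S a)) ≤ ⟪u b, u a⟫ := by
      intro a b h1 h2 h3 hpi
      have hsub : Icc a b ⊆ Icc s t := subset_trans (Icc_subset_Icc h1 h3) hsubI
      have hcomp := angle_comp u u' h2 hL₁_pos.le
        (fun τ hτ => (huderiv τ (hsub hτ)).hasDerivWithinAt)
        (fun τ hτ => hunit τ (hsub hτ))
        (fun τ hτ => horth τ (hsub hτ))
        (fun τ hτ => hubd τ (hsub hτ))
      refine le_trans ?_ hcomp
      have hL₁ba : L₁ * (b - a) ≤ (L₁/L₀) * (S b - S a) := by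
        have h5 := hSlow a b h2 hsub
        calc L₁ * (b-a) = (L₁/L₀) * (L₀ * (b-a)) := by
              field_simp
        _ ≤ (L₁/L₀) * (S b - S a) := mul_le_mul_of_nonneg_left h5 (by positivity)
      apply Real.cos_le_cos_of_nonneg_of_le_pi
      · exact le_min (mul_nonneg hL₁_pos.le (by linarith)) Real.pi_nonneg
      · exact hpi
      · rcases le_or_gt (L₁ * (b - a)) Real.pi with h | h
        · rw [min_eq_left h]; exact hL₁ba
        · rw [min_eq_right h.le]; linarith
    -- midpoint of arc length
    have hmid : ℓ/2 ∈ Icc (S τ₁) (S τ₂) := by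
      rw [hS₁, ← hℓdef]
      exact Set.mem_Icc.2 ⟨by linarith, by linarith⟩
    obtain ⟨τm, hτm, hSτm⟩ := intermediate_value_Icc hlt.le hSc.continuousOn hmid
    have hτmst : τm ∈ Icc s t := hsubI hτm
    have hSd₁ : S τm - S τ₁ = ℓ/2 := by rw [hSτm, hS₁]; ring
    have hSd₂ : S τ₂ - S τm = ℓ/2 := by rw [hSτm]; ring
    -- endpoint angle bounds
    have hc₁ : Real.cos ((L₁/L₀) * (ℓ/2)) ≤ ⟪u τm, u τ₁⟫ := by
      have h := hang τ₁ τm le_rfl hτm.1 hτm.2 (by rw [hSd₁]; exact hΘπ)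
      rwa [hSd₁] at h
    have hc₂ : Real.cos ((L₁/L₀) * (ℓ/2)) ≤ ⟪u τ₂, u τm⟫ := by
      have h := hang τm τ₂ hτm.1 hτm.2 le_rfl (by rw [hSd₂]; exact hΘπ)
      rwa [hSd₂] at h
    -- pointwise integrand bound
    have hpt : ∀ τ ∈ Icc τ₁ τ₂,
        ‖F τ‖ * Real.cos ((L₁/L₀) * (S τ - ℓ/2)) ≤ ⟪F τ, u τm⟫ := by
      intro τ hτI
      have hτst := hsubI hτI
      have hFw : ⟪F τ, u τm⟫ = ‖F τ‖ * ⟪u τ, u τm⟫ := by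
        have hsm : F τ = ‖F τ‖ • u τ := (smul_inv_smul₀ (hFpos τ hτst).ne' (F τ)).symm
        conv_lhs => rw [hsm]
        rw [real_inner_smul_left]
      rw [hFw]
      apply mul_le_mul_of_nonneg_left _ (norm_nonneg _)
      have hSτ0 : 0 ≤ S τ := by
        have := hSnonneg τ₁ τ hτI.1; rw [hS₁] at this; linarith
      have hSτℓ : S τ ≤ ℓ := by
        have := hSnonneg τ τ₂ hτI.2; linarith
      rcases le_total τ τm with hcase | hcase
      · have harg : (L₁/L₀) * (S τm - S τ) ≤ Real.pi := by
          have hmono2 : (L₁/L₀) * (S τm - S τ) ≤ (L₁/L₀) * (ℓ/2) := by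
            apply mul_le_mul_of_nonneg_left _ (by positivity)
            rw [hSτm]; linarith
          linarith
        have h := hang τ τm hτI.1 hcase hτm.2 harg
        have hcos : Real.cos ((L₁/L₀) * (S τ - ℓ/2))
            = Real.cos ((L₁/L₀) * (S τm - S τ)) := by
          rw [← Real.cos_neg ((L₁/L₀) * (S τm - S τ))]
          congr 1
          rw [hSτm]
          ring
        rw [hcos, real_inner_comm]
        exact h
      · have harg : (L₁/L₀) * (S τ - S τm) ≤ Real.pi := by
          have hmono2 : (L₁/L₀) * (S τ - S τm) ≤ (L₁/L₀) * (ℓ/2) := by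
            apply mul_le_mul_of_nonneg_left _ (by positivity)
            rw [hSτm]; linarith
          linarith
        have h := hang τm τ hτm.1 hcase hτI.2 harg
        have hcos : (L₁/L₀) * (S τ - ℓ/2) = (L₁/L₀) * (S τ - S τm) := by rw [hSτm]
        rw [hcos]
        exact h
    -- FTC
    have hFTC : (∫ τ in τ₁..τ₂, ⟪F τ, u τm⟫)
        = ⟪x τ₂ - y, u τm⟫ - ⟪x τ₁ - y, u τm⟫ := by
      apply intervalIntegral.integral_eq_sub_of_hasDerivAt
      · intro τ _
        have h := ((hsol τ).sub_const y).inner ℝ (hasDerivAt_const τ (u τm))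
        simpa using h
      · exact (hFc.inner continuous_const).intervalIntegrable _ _
    -- integral comparison
    have hmono : (∫ τ in τ₁..τ₂, ‖F τ‖ * Real.cos ((L₁/L₀) * (S τ - ℓ/2)))
        ≤ ∫ τ in τ₁..τ₂, ⟪F τ, u τm⟫ := by
      apply intervalIntegral.integral_mono_on hlt.le _ _ hpt
      · exact (hNc.mul (Real.continuous_cos.comp
          (continuous_const.mul (hSc.sub continuous_const)))).intervalIntegrable _ _
      · exact (hFc.inner continuous_const).intervalIntegrable _ _
    -- substitution
    have hsubst : (∫ τ in τ₁..τ₂, ‖F τ‖ * Real.cos ((L₁/L₀) * (S τ - ℓ/2)))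
        = ∫ σ in (0:ℝ)..ℓ, Real.cos ((L₁/L₀) * (σ - ℓ/2)) := by
      have h := intervalIntegral.integral_comp_smul_deriv (a := τ₁) (b := τ₂)
        (f := S) (f' := fun τ => ‖F τ‖) (g := fun σ => Real.cos ((L₁/L₀) * (σ - ℓ/2)))
        (fun τ _ => hSderiv τ) hNc.continuousOn
        (Real.continuous_cos.comp (continuous_const.mul (continuous_id.sub continuous_const)))
      rw [hS₁] at h
      rw [← h]
      congr 1
    -- value of the model integral
    have hval : (∫ σ in (0:ℝ)..ℓ, Real.cos ((L₁/L₀) * (σ - ℓ/2)))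
        = (2*L₀/L₁) * Real.sin ((L₁/L₀) * (ℓ/2)) := by
      have hD : ∀ σ : ℝ, HasDerivAt (fun σ => (L₀/L₁) * Real.sin ((L₁/L₀) * (σ - ℓ/2)))
          (Real.cos ((L₁/L₀) * (σ - ℓ/2))) σ := by
        intro σ
        have h1 : HasDerivAt (fun σ : ℝ => (L₁/L₀) * (σ - ℓ/2)) (L₁/L₀) σ := by
          simpa using ((hasDerivAt_id σ).sub_const (ℓ/2)).const_mul (L₁/L₀)
        have h2 := (Real.hasDerivAt_sin ((L₁/L₀) * (σ - ℓ/2))).comp σ h1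
        have h3 := h2.const_mul (L₀/L₁)
        refine h3.congr_deriv ?_
        field_simp
      rw [intervalIntegral.integral_eq_sub_of_hasDerivAt (fun σ _ => hD σ)
        ((Real.continuous_cos.comp (continuous_const.mul
          (continuous_id.sub continuous_const))).intervalIntegrable _ _)]
      have e1 : (L₁/L₀) * ((0:ℝ) - ℓ/2) = -((L₁/L₀) * (ℓ/2)) := by ring
      have e2 : (L₁/L₀) * (ℓ - ℓ/2) = (L₁/L₀) * (ℓ/2) := by ring
      rw [e1, e2, Real.sin_neg]
      ring
    -- endpoint estimates
    have hendpt : ∀ τ c, τ ∈ Icc s t → ⟪y - x τ, f (x τ)⟫ = 0 → ‖y - x τ‖ ≤ γ →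
        c = ⟪u τm, u τ⟫ → |⟪y - x τ, u τm⟫| ≤ γ * Real.sqrt (1 - c^2) := by
      intro τ c hτst ho hn hc
      have horthu : ⟪y - x τ, u τ⟫ = 0 := by
        have huτ : u τ = ‖F τ‖⁻¹ • F τ := rfl
        rw [huτ, real_inner_smul_right]
        have hoF : ⟪y - x τ, F τ⟫ = 0 := ho
        rw [hoF, mul_zero]
      have hsplit : ⟪y - x τ, u τm⟫ = ⟪y - x τ, u τm - c • u τ⟫ := by
        rw [inner_sub_right, real_inner_smul_right (y - x τ) (u τ) c, horthu, mul_zero, sub_zero]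
      have hnorm2 : ‖u τm - c • u τ‖^2 = 1 - c^2 := by
        rw [norm_sub_sq_real, real_inner_smul_right (u τm) (u τ) c, ← hc, norm_smul c (u τ),
          hunit τ hτst, hunit τm hτmst, Real.norm_eq_abs]
        simp only [one_pow, mul_one, sq_abs]
        ring
      have hnorm : ‖u τm - c • u τ‖ = Real.sqrt (1 - c^2) := by
        rw [← hnorm2, Real.sqrt_sq (norm_nonneg _)]
      calc |⟪y - x τ, u τm⟫| = |⟪y - x τ, u τm - c • u τ⟫| := by rw [hsplit]
      _ ≤ ‖y - x τ‖ * ‖u τm - c • u τ‖ := abs_real_inner_le_norm _ _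
      _ ≤ γ * Real.sqrt (1 - c^2) := by
          rw [hnorm]
          exact mul_le_mul_of_nonneg_right hn (Real.sqrt_nonneg _)
    have hA := hendpt τ₁ ⟪u τm, u τ₁⟫ hτ₁st hy₁o hy₁n rfl
    have hB := hendpt τ₂ ⟪u τm, u τ₂⟫ hτ₂st hy₂o hy₂n rfl
    -- main chain
    have hchain : (2*L₀/L₁) * Real.sin ((L₁/L₀) * (ℓ/2))
        ≤ γ * Real.sqrt (1 - ⟪u τm, u τ₁⟫^2) + γ * Real.sqrt (1 - ⟪u τm, u τ₂⟫^2) := by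
      have e : ⟪x τ₂ - y, u τm⟫ - ⟪x τ₁ - y, u τm⟫
          = ⟪y - x τ₁, u τm⟫ - ⟪y - x τ₂, u τm⟫ := by
        rw [← neg_sub y (x τ₂), ← neg_sub y (x τ₁), inner_neg_left, inner_neg_left]
        ring
      calc (2*L₀/L₁) * Real.sin ((L₁/L₀) * (ℓ/2))
          = ∫ τ in τ₁..τ₂, ‖F τ‖ * Real.cos ((L₁/L₀) * (S τ - ℓ/2)) := by
            rw [hsubst, hval]
      _ ≤ ∫ τ in τ₁..τ₂, ⟪F τ, u τm⟫ := hmono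
      _ = ⟪y - x τ₁, u τm⟫ - ⟪y - x τ₂, u τm⟫ := by rw [hFTC, e]
      _ ≤ |⟪y - x τ₁, u τm⟫| + |⟪y - x τ₂, u τm⟫| := by
          have l1 := le_abs_self ⟪y - x τ₁, u τm⟫
          have l2 := neg_abs_le ⟪y - x τ₂, u τm⟫
          linarith
      _ ≤ γ * Real.sqrt (1 - ⟪u τm, u τ₁⟫^2) + γ * Real.sqrt (1 - ⟪u τm, u τ₂⟫^2) := by
          linarith [hA, hB]
    have hc₂' : Real.cos ((L₁/L₀) * (ℓ/2)) ≤ ⟪u τm, u τ₂⟫ := by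
      rw [real_inner_comm]; exact hc₂
    have hsinΘpos : 0 < Real.sin ((L₁/L₀) * (ℓ/2)) :=
      Real.sin_pos_of_pos_of_lt_pi hΘpos (lt_of_lt_of_le hΘβ hβπ)
    -- final case analysis
    rcases le_or_gt ((L₁/L₀) * (ℓ/2)) (Real.pi/2) with hhalf | hhalf
    · -- short case
      have hcosnn : 0 ≤ Real.cos ((L₁/L₀) * (ℓ/2)) :=
        Real.cos_nonneg_of_mem_Icc ⟨by linarith [Real.pi_pos], hhalf⟩
      have hb₁ : Real.sqrt (1 - ⟪u τm, u τ₁⟫^2) ≤ Real.sin ((L₁/L₀) * (ℓ/2)) := by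
        have h1 : 1 - ⟪u τm, u τ₁⟫^2 ≤ (Real.sin ((L₁/L₀) * (ℓ/2)))^2 := by
          nlinarith [Real.sin_sq_add_cos_sq ((L₁/L₀) * (ℓ/2)), hc₁, hcosnn]
        calc Real.sqrt (1 - ⟪u τm, u τ₁⟫^2) ≤ Real.sqrt ((Real.sin ((L₁/L₀) * (ℓ/2)))^2) :=
              Real.sqrt_le_sqrt h1
        _ = Real.sin ((L₁/L₀) * (ℓ/2)) := Real.sqrt_sq hsinΘpos.le
      have hb₂ : Real.sqrt (1 - ⟪u τm, u τ₂⟫^2) ≤ Real.sin ((L₁/L₀) * (ℓ/2)) := by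
        have h1 : 1 - ⟪u τm, u τ₂⟫^2 ≤ (Real.sin ((L₁/L₀) * (ℓ/2)))^2 := by
          nlinarith [Real.sin_sq_add_cos_sq ((L₁/L₀) * (ℓ/2)), hc₂', hcosnn]
        calc Real.sqrt (1 - ⟪u τm, u τ₂⟫^2) ≤ Real.sqrt ((Real.sin ((L₁/L₀) * (ℓ/2)))^2) :=
              Real.sqrt_le_sqrt h1
        _ = Real.sin ((L₁/L₀) * (ℓ/2)) := Real.sqrt_sq hsinΘpos.le
      have hfinal : (2*L₀/L₁) * Real.sin ((L₁/L₀) * (ℓ/2))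
          ≤ 2 * γ * Real.sin ((L₁/L₀) * (ℓ/2)) := by
        have := mul_le_mul_of_nonneg_left hb₁ hγ.le
        have := mul_le_mul_of_nonneg_left hb₂ hγ.le
        linarith [hchain]
      have hfac : 0 < 2*L₀/L₁ - 2*γ := by
        have h9 : 2*L₀/L₁ = 2*(L₀/L₁) := by ring
        rw [h9]
        linarith
      nlinarith [mul_pos hfac hsinΘpos]
    · -- long case
      have hb₁ : Real.sqrt (1 - ⟪u τm, u τ₁⟫^2) ≤ 1 :=
        Real.sqrt_le_one.2 (by nlinarith [sq_nonneg ⟪u τm, u τ₁⟫])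
      have hb₂ : Real.sqrt (1 - ⟪u τm, u τ₂⟫^2) ≤ 1 :=
        Real.sqrt_le_one.2 (by nlinarith [sq_nonneg ⟪u τm, u τ₂⟫])
      have h2γ : (2*L₀/L₁) * Real.sin ((L₁/L₀) * (ℓ/2)) ≤ 2*γ := by
        have := mul_le_mul_of_nonneg_left hb₁ hγ.le
        have := mul_le_mul_of_nonneg_left hb₂ hγ.le
        linarith [hchain]
      have hsinle : Real.sin ((L₁/L₀) * (ℓ/2)) ≤ L₁ * γ / L₀ := by
        rw [le_div_iff₀ hL₀_pos]
        rw [div_mul_eq_mul_div, div_le_iff₀ hL₁_pos] at h2γ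
        nlinarith [h2γ]
      have hsin_gt : Real.sin (Real.pi - Real.arcsin (L₁ * γ / L₀))
          < Real.sin ((L₁/L₀) * (ℓ/2)) := by
        rw [← Real.cos_sub_pi_div_two ((L₁/L₀) * (ℓ/2)),
          ← Real.cos_sub_pi_div_two (Real.pi - Real.arcsin (L₁ * γ / L₀))]
        apply Real.strictAntiOn_cos
        · constructor
          · linarith
          · linarith [Real.pi_pos]
        · constructor
          · linarith
          · linarith [Real.pi_pos]
        · linarith
      rw [hsinβ] at hsin_gt
      linarith
  intro τ₁ h₁ τ₂ h₂ hne
  rw [Set.eq_empty_iff_forall_notMem]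
  rintro y ⟨hy₁, hy₂⟩
  rcases lt_or_gt_of_ne hne with h | h
  · exact key τ₁ τ₂ h₁ h₂ h y hy₁ hy₂
  · exact key τ₂ τ₁ h₂ h₁ h y hy₂ hy₁
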